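/- arXiv:1808.08645 — 5 statements merged into one kernel-verified Lean document; each statement's English description precedes it below -/
import Mathlib

section
/- Let d ≥ 0, N, M ≥ 0, and let α, β : Fin (d+1) → ℕ be multi-indices with ∑_i α_i = N and ∑_i β_i = M. Then, with C^N_α = N!/(α_0!⋯α_d!) denoting the multinomial coefficient, one has the identity of natural numbers: Nat.choose (N+M) N · C^N_α · C^M_β = (∏_{i=0}^{d} Nat.choose (α_i + β_i) (α_i)) · C^{N+M}_{α+β}. -/
/-- For multi-indices `α, β : Fin (d+1) → ℕ` with `∑ α = N` and `∑ β = M`,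
`(N+M choose N) ⬝ C^N_α ⬝ C^M_β = (∏ i, (α i + β i choose α i)) ⬝ C^{N+M}_{α+β}`,
where `C^N_α` is the multinomial coefficient. -/
theorem multinomial_product_identity (d N M : ℕ) (α β : Fin (d + 1) → ℕ)
    (hα : ∑ i, α i = N) (hβ : ∑ i, β i = M) :
    Nat.choose (N + M) N * Nat.multinomial Finset.univ α * Nat.multinomial Finset.univ β =
      (∏ i, Nat.choose (α i + β i) (α i)) * Nat.multinomial Finset.univ (α + β) := by
  have hP : 0 < (∏ i, (α i).factorial) * ∏ i, (β i).factorial :=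
    Nat.mul_pos (Finset.prod_pos fun i _ => (α i).factorial_pos)
      (Finset.prod_pos fun i _ => (β i).factorial_pos)
  apply Nat.eq_of_mul_eq_mul_left hP
  have hsα := Nat.multinomial_spec (Finset.univ : Finset (Fin (d+1))) α
  have hsβ := Nat.multinomial_spec (Finset.univ : Finset (Fin (d+1))) β
  have hsab := Nat.multinomial_spec (Finset.univ : Finset (Fin (d+1))) (α + β)
  rw [hα] at hsα; rw [hβ] at hsβ
  have hsum : ∑ i, (α + β) i = N + M := by
    simp [Pi.add_apply, Finset.sum_add_distrib, hα, hβ]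
  rw [hsum] at hsab
  calc ((∏ i, (α i).factorial) * ∏ i, (β i).factorial) *
        (Nat.choose (N + M) N * Nat.multinomial Finset.univ α *
          Nat.multinomial Finset.univ β)
      = Nat.choose (N + M) N * ((∏ i, (α i).factorial) * Nat.multinomial Finset.univ α) *
          ((∏ i, (β i).factorial) * Nat.multinomial Finset.univ β) := by ring
    _ = Nat.choose (N + M) N * Nat.factorial N * Nat.factorial M := by rw [hsα, hsβ]
    _ = Nat.factorial (N + M) := by
        rw [Nat.choose_symm_add, Nat.add_choose_mul_factorial_mul_factorial]
    _ = (∏ i, ((α + β) i).factorial) * Nat.multinomial Finset.univ (α + β) := hsab.symm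
    _ = (∏ i, (α i + β i).choose (α i) * ((α i).factorial * (β i).factorial)) *
          Nat.multinomial Finset.univ (α + β) := by
        congr 1
        refine Finset.prod_congr rfl fun i _ => ?_
        rw [Pi.add_apply, ← Nat.add_choose_mul_factorial_mul_factorial (α i) (β i),
          Nat.choose_symm_add]
        ring
    _ = ((∏ i, (α i).factorial) * ∏ i, (β i).factorial) *
          ((∏ i, Nat.choose (α i + β i) (α i)) * Nat.multinomial Finset.univ (α + β)) := by
        rw [Finset.prod_mul_distrib, Finset.prod_mul_distrib]; ring
end

section
/- Let d ≥ 1, N, M ≥ 0, and let a_α ∈ ℚ (for multi-indices α of order N) and b_β ∈ ℚ (for multi-indices β of order M) be arbitrary coefficients. Set f = ∑_{|α|=N} a_α B^N_α and g = ∑_{|β|=M} b_β B^M_β. Then f·g = ∑_{|γ|=N+M} c_γ B^{N+M}_γ, where for each multi-index γ of order N+M, c_γ = ∑_{|β|=M, β ≤ γ componentwise} a_{γ−β} · b_β · (∏_{i=0}^{d} Nat.choose (γ_i) (β_i)) / Nat.choose (N+M) N. -/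
/-- Multi-indices of dimension `d+1` and order `N`. -/
abbrev MIdx (d N : ℕ) := {α : Fin (d + 1) → ℕ // ∑ i, α i = N}

instance (d N : ℕ) : Fintype (MIdx d N) :=
  Fintype.subtype (Finset.Nat.antidiagonalTuple (d + 1) N) fun _ =>
    Finset.Nat.mem_antidiagonalTuple

/-- The Bernstein polynomial `B^N_α = C^N_α ∏ i, λ_i ^ α i` (with `N = ∑ i, α i`),
as a multivariate polynomial in the barycentric variables `λ_0, …, λ_d` over `ℚ`. -/
noncomputable def Bern (d : ℕ) (α : Fin (d + 1) → ℕ) : MvPolynomial (Fin (d + 1)) ℚ :=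
  MvPolynomial.C (Nat.multinomial Finset.univ α : ℚ) * ∏ i, MvPolynomial.X i ^ α i

/-- Key combinatorial identity (nat version). -/
lemma key_nat {n : ℕ} (α β : Fin n → ℕ) :
    Nat.multinomial Finset.univ (α + β) * ∏ i, Nat.choose (α i + β i) (β i) =
      Nat.choose (∑ i, α i + ∑ i, β i) (∑ i, α i) *
        Nat.multinomial Finset.univ α * Nat.multinomial Finset.univ β := by
  have hAB : 0 < (∏ i, (α i).factorial) * ∏ i, (β i).factorial := by
    refine Nat.mul_pos ?_ ?_ <;>
      exact Finset.prod_pos fun i _ => Nat.factorial_pos _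
  refine Nat.eq_of_mul_eq_mul_left hAB ?_
  have hspecA := Nat.multinomial_spec Finset.univ α
  have hspecB := Nat.multinomial_spec Finset.univ β
  have hprod : (∏ i, Nat.choose (α i + β i) (β i)) *
      ((∏ i, (α i).factorial) * ∏ i, (β i).factorial) =
      ∏ i, (α i + β i).factorial := by
    rw [← Finset.prod_mul_distrib, ← Finset.prod_mul_distrib]
    refine Finset.prod_congr rfl fun i _ => ?_
    calc (α i + β i).choose (β i) * ((α i).factorial * (β i).factorial)
        = (α i + β i).choose (β i) * (α i).factorial * (β i).factorial := by ring
      _ = (α i + β i).factorial := Nat.add_choose_mul_factorial_mul_factorial (α i) (β i)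
  calc ((∏ i, (α i).factorial) * ∏ i, (β i).factorial) *
        (Nat.multinomial Finset.univ (α + β) * ∏ i, Nat.choose (α i + β i) (β i))
      = (∏ i, (α i + β i).factorial) * Nat.multinomial Finset.univ (α + β) := by
        rw [← hprod]; ring
    _ = (∑ i, (α i + β i)).factorial := by
        simpa [Pi.add_apply] using Nat.multinomial_spec Finset.univ (α + β)
    _ = (∑ i, α i + ∑ i, β i).factorial := by rw [Finset.sum_add_distrib]
    _ = (∑ i, β i + ∑ i, α i).factorial := by rw [add_comm]
    _ = (∑ i, β i + ∑ i, α i).choose (∑ i, α i) * (∑ i, β i).factorial *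
          (∑ i, α i).factorial := (Nat.add_choose_mul_factorial_mul_factorial _ _).symm
    _ = (∑ i, α i + ∑ i, β i).choose (∑ i, α i) * (∑ i, α i).factorial *
          (∑ i, β i).factorial := by rw [add_comm (∑ i, β i)]; ring
    _ = (∑ i, α i + ∑ i, β i).choose (∑ i, α i) *
          ((∏ i, (α i).factorial) * Nat.multinomial Finset.univ α) *
          ((∏ i, (β i).factorial) * Nat.multinomial Finset.univ β) := by
        rw [hspecA, hspecB]
    _ = _ := by ring

/-- Product of two Bernstein polynomials. -/
lemma bern_mul (d : ℕ) (α β : Fin (d + 1) → ℕ) :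
    Bern d α * Bern d β =
      ((Nat.multinomial Finset.univ α * Nat.multinomial Finset.univ β : ℕ) /
        (Nat.multinomial Finset.univ (α + β) : ℚ)) • Bern d (α + β) := by
  have hγ : (Nat.multinomial Finset.univ (α + β) : ℚ) ≠ 0 :=
    Nat.cast_ne_zero.2 (Nat.multinomial_pos _ _).ne'
  rw [Bern, Bern, Bern, MvPolynomial.smul_eq_C_mul]
  have hX : (∏ i, MvPolynomial.X (R := ℚ) i ^ α i) * ∏ i, MvPolynomial.X i ^ β i
      = ∏ i, MvPolynomial.X i ^ (α + β) i := by
    rw [← Finset.prod_mul_distrib]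
    exact Finset.prod_congr rfl fun i _ => by rw [Pi.add_apply, pow_add]
  rw [mul_mul_mul_comm, hX, ← mul_assoc, ← MvPolynomial.C_mul, ← MvPolynomial.C_mul]
  congr 2
  push_cast
  field_simp

/-- If `f = ∑_{|α|=N} a_α B^N_α` and `g = ∑_{|β|=M} b_β B^M_β`, then
`f ⬝ g = ∑_{|γ|=N+M} c_γ B^{N+M}_γ` with
`c_γ = ∑_{|β|=M, β ≤ γ} a_{γ-β} b_β (∏ i, (γ i choose β i)) / (N+M choose N)`. -/
theorem bernstein_mul_coeffs (d N M : ℕ) (hd : 1 ≤ d)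
    (a b : (Fin (d + 1) → ℕ) → ℚ) :
    (∑ α : MIdx d N, a α.1 • Bern d α.1) * (∑ β : MIdx d M, b β.1 • Bern d β.1) =
      ∑ γ : MIdx d (N + M),
        (∑ β : MIdx d M,
            if ∀ i, β.1 i ≤ γ.1 i then
              a (γ.1 - β.1) * b β.1 * ((∏ i, Nat.choose (γ.1 i) (β.1 i) : ℕ) : ℚ) /
                (Nat.choose (N + M) N : ℚ)
            else 0) • Bern d γ.1 := by
  rw [Finset.sum_mul_sum]
  simp only [Finset.sum_smul, ite_smul, zero_smul]
  rw [Finset.sum_comm]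
  conv_rhs => rw [Finset.sum_comm]
  refine Finset.sum_congr rfl fun β _ => ?_
  rw [← Finset.sum_filter]
  refine Finset.sum_bij'
    (i := fun (α : MIdx d N) (_ : α ∈ Finset.univ) => (⟨α.1 + β.1, by
      simp only [Pi.add_apply]; rw [Finset.sum_add_distrib, α.2, β.2]⟩ : MIdx d (N + M)))
    (j := fun (γ : MIdx d (N + M)) (hγ : γ ∈ Finset.univ.filter
        fun γ : MIdx d (N + M) => ∀ i, β.1 i ≤ γ.1 i) => (⟨γ.1 - β.1, by
      have h := (Finset.mem_filter.1 hγ).2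
      have h2 : ∀ i, (γ.1 - β.1) i = γ.1 i - β.1 i := fun i => rfl
      have h3 : ∑ i, (γ.1 i - β.1 i) + ∑ i, β.1 i = ∑ i, γ.1 i := by
        rw [← Finset.sum_add_distrib]
        exact Finset.sum_congr rfl fun i _ => Nat.sub_add_cancel (h i)
      simp only [h2]
      have := γ.2; have := β.2; omega⟩ : MIdx d N))
    ?_ ?_ ?_ ?_ ?_
  · intro α _
    refine Finset.mem_filter.2 ⟨Finset.mem_univ _, fun i => Nat.le_add_left _ _⟩
  · intro γ _; exact Finset.mem_univ _
  · intro α _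
    ext i
    simp [Pi.sub_apply, Pi.add_apply]
  · intro γ hγ
    have h := (Finset.mem_filter.1 hγ).2
    ext i
    simp only [Pi.add_apply, Pi.sub_apply]
    exact Nat.sub_add_cancel (h i)
  · intro α _
    rw [smul_mul_smul_comm, bern_mul, smul_smul]
    congr 1
    have hsub : (α.1 + β.1) - β.1 = α.1 := by ext i; simp
    rw [hsub]
    have hkey := key_nat α.1 β.1
    rw [α.2, β.2] at hkey
    have hCNM : ((N + M).choose N : ℚ) ≠ 0 :=
      Nat.cast_ne_zero.2 (Nat.choose_pos (Nat.le_add_right _ _)).ne'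
    have hγne : (Nat.multinomial Finset.univ (α.1 + β.1) : ℚ) ≠ 0 :=
      Nat.cast_ne_zero.2 (Nat.multinomial_pos _ _).ne'
    have hkeyQ : (Nat.multinomial Finset.univ (α.1 + β.1) : ℚ) *
        (∏ i, (α.1 i + β.1 i).choose (β.1 i) : ℕ) =
        ((N + M).choose N : ℚ) * (Nat.multinomial Finset.univ α.1 : ℚ) *
          (Nat.multinomial Finset.univ β.1 : ℚ) := by exact_mod_cast hkey
    simp only [Pi.add_apply]
    show a α.1 * b β.1 *
        (((Nat.multinomial Finset.univ α.1 * Nat.multinomial Finset.univ β.1 : ℕ) : ℚ) /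
          ((Nat.multinomial Finset.univ (α.1 + β.1) : ℕ) : ℚ)) =
      a α.1 * b β.1 * ((∏ i, ((α.1 + β.1) i).choose (β.1 i) : ℕ) : ℚ) /
        (((N + M).choose N : ℕ) : ℚ)
    simp only [Pi.add_apply]
    push_cast at hkeyQ ⊢
    field_simp
    linear_combination (-(a α.1 * b β.1)) * hkeyQ
end

section
/- Let d ≥ 1, N ≥ 0, let a_α ∈ ℚ (for multi-indices α of order N) be arbitrary coefficients, and let b_0,…,b_d ∈ ℚ. Set f = ∑_{|α|=N} a_α B^N_α and g = ∑_{j=0}^{d} b_j B^1_{e_j}. Then f·g = ∑_{|γ|=N+1} c_γ B^{N+1}_γ, where for each multi-index γ of order N+1, c_γ = ∑_{j : γ_j ≥ 1} a_{γ−e_j} · b_j · γ_j/(N+1). -/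
/-- The multi-index `e_j` with `1` in position `j` and `0` elsewhere. -/
def eIdx (d : ℕ) (j : Fin (d + 1)) : Fin (d + 1) → ℕ := fun k => if k = j then 1 else 0

open Finset MvPolynomial

lemma sum_eIdx (d : ℕ) (j : Fin (d + 1)) : ∑ i, eIdx d j i = 1 := by
  simp [eIdx]

lemma sum_add_eIdx (d : ℕ) (α : Fin (d + 1) → ℕ) (j : Fin (d + 1)) :
    ∑ i, (α + eIdx d j) i = (∑ i, α i) + 1 := by
  simp [Finset.sum_add_distrib, sum_eIdx]

lemma multinomial_eIdx (d : ℕ) (j : Fin (d + 1)) :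
    Nat.multinomial Finset.univ (eIdx d j) = 1 := by
  have h := Nat.multinomial_spec Finset.univ (eIdx d j)
  have h1 : ∏ i, Nat.factorial (eIdx d j i) = 1 := by
    simp [eIdx, apply_ite Nat.factorial]
  rw [h1, one_mul, sum_eIdx] at h
  simpa using h

lemma prod_fact_add_eIdx (d : ℕ) (α : Fin (d + 1) → ℕ) (j : Fin (d + 1)) :
    ∏ i, Nat.factorial ((α + eIdx d j) i) = (α j + 1) * ∏ i, Nat.factorial (α i) := by
  rw [← Finset.mul_prod_erase Finset.univ _ (Finset.mem_univ j),
      ← Finset.mul_prod_erase Finset.univ (fun i => Nat.factorial (α i)) (Finset.mem_univ j)]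
  have h1 : (α + eIdx d j) j = α j + 1 := by simp [eIdx]
  have h2 : ∀ i ∈ Finset.univ.erase j,
      Nat.factorial ((α + eIdx d j) i) = Nat.factorial (α i) := by
    intro i hi
    have : i ≠ j := (Finset.mem_erase.mp hi).1
    simp [eIdx, this]
  rw [Finset.prod_congr rfl h2, h1, Nat.factorial_succ, mul_assoc]

lemma multinomial_add_eIdx (d : ℕ) (α : Fin (d + 1) → ℕ) (j : Fin (d + 1)) :
    (α j + 1) * Nat.multinomial Finset.univ (α + eIdx d j) =
      ((∑ i, α i) + 1) * Nat.multinomial Finset.univ α := by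
  have hP : 0 < ∏ i, Nat.factorial (α i) :=
    Finset.prod_pos fun i _ => Nat.factorial_pos _
  apply Nat.eq_of_mul_eq_mul_left hP
  have h1 := Nat.multinomial_spec Finset.univ (α + eIdx d j)
  have h2 := Nat.multinomial_spec Finset.univ α
  rw [prod_fact_add_eIdx, sum_add_eIdx] at h1
  calc (∏ i, Nat.factorial (α i)) * ((α j + 1) * Nat.multinomial Finset.univ (α + eIdx d j))
      = (α j + 1) * (∏ i, Nat.factorial (α i)) * Nat.multinomial Finset.univ (α + eIdx d j) := by
        ring
    _ = Nat.factorial ((∑ i, α i) + 1) := h1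
    _ = ((∑ i, α i) + 1) * Nat.factorial (∑ i, α i) := Nat.factorial_succ _
    _ = ((∑ i, α i) + 1) * ((∏ i, Nat.factorial (α i)) * Nat.multinomial Finset.univ α) := by
        rw [h2]
    _ = _ := by ring

lemma prod_X_eIdx (d : ℕ) (j : Fin (d + 1)) :
    ∏ i, (MvPolynomial.X i : MvPolynomial (Fin (d + 1)) ℚ) ^ eIdx d j i
      = MvPolynomial.X j := by
  rw [← Finset.mul_prod_erase Finset.univ _ (Finset.mem_univ j)]
  have h2 : ∀ i ∈ Finset.univ.erase j,
      (MvPolynomial.X i : MvPolynomial (Fin (d + 1)) ℚ) ^ eIdx d j i = 1 := by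
    intro i hi
    simp [eIdx, (Finset.mem_erase.mp hi).1]
  rw [Finset.prod_congr rfl h2]
  simp [eIdx]

lemma prod_X_add_eIdx (d : ℕ) (α : Fin (d + 1) → ℕ) (j : Fin (d + 1)) :
    ∏ i, (MvPolynomial.X i : MvPolynomial (Fin (d + 1)) ℚ) ^ (α + eIdx d j) i
      = (∏ i, MvPolynomial.X i ^ α i) * MvPolynomial.X j := by
  have : ∀ i, (MvPolynomial.X i : MvPolynomial (Fin (d + 1)) ℚ) ^ (α + eIdx d j) i
      = MvPolynomial.X i ^ α i * MvPolynomial.X i ^ eIdx d j i := by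
    intro i; rw [← pow_add]; rfl
  rw [Finset.prod_congr rfl fun i _ => this i, Finset.prod_mul_distrib, prod_X_eIdx]

lemma bern_mul_eIdx (d N : ℕ) (α : Fin (d + 1) → ℕ) (hα : ∑ i, α i = N) (j : Fin (d + 1)) :
    Bern d α * Bern d (eIdx d j)
      = (((α j : ℚ) + 1) / ((N : ℚ) + 1)) • Bern d (α + eIdx d j) := by
  have hN1 : ((N : ℚ) + 1) ≠ 0 := by positivity
  have hc : (Nat.multinomial Finset.univ α : ℚ)
      = (((α j : ℚ) + 1) / ((N : ℚ) + 1)) * (Nat.multinomial Finset.univ (α + eIdx d j)) := by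
    have := multinomial_add_eIdx d α j
    rw [hα] at this
    have hcast : ((α j : ℚ) + 1) * (Nat.multinomial Finset.univ (α + eIdx d j))
        = ((N : ℚ) + 1) * (Nat.multinomial Finset.univ α) := by
      exact_mod_cast congrArg (Nat.cast : ℕ → ℚ) this
    field_simp
    linarith [hcast]
  unfold Bern
  rw [multinomial_eIdx, prod_X_eIdx, prod_X_add_eIdx, hc]
  simp [MvPolynomial.smul_eq_C_mul]
  ring

/-- If `f = ∑_{|α|=N} a_α B^N_α` and `g = ∑_{j} b_j B^1_{e_j}`, then
`f ⬝ g = ∑_{|γ|=N+1} c_γ B^{N+1}_γ` with `c_γ = ∑_{j : γ_j ≥ 1} a_{γ-e_j} b_j γ_j / (N+1)`. -/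
theorem bernstein_mul_linear_coeffs (d N : ℕ) (hd : 1 ≤ d)
    (a : (Fin (d + 1) → ℕ) → ℚ) (b : Fin (d + 1) → ℚ) :
    (∑ α : MIdx d N, a α.1 • Bern d α.1) * (∑ j, b j • Bern d (eIdx d j)) =
      ∑ γ : MIdx d (N + 1),
        (∑ j, if 1 ≤ γ.1 j then
            a (γ.1 - eIdx d j) * b j * (γ.1 j : ℚ) / ((N : ℚ) + 1)
          else 0) • Bern d γ.1 := by
  rw [Finset.sum_mul_sum]
  have LHS :
      ∑ α : MIdx d N, ∑ j, (a α.1 • Bern d α.1) * (b j • Bern d (eIdx d j))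
        = ∑ p ∈ (Finset.univ ×ˢ Finset.univ : Finset (MIdx d N × Fin (d + 1))),
            (a p.1.1 * b p.2 * ((p.1.1 p.2 : ℚ) + 1) / ((N : ℚ) + 1))
              • Bern d (p.1.1 + eIdx d p.2) := by
    rw [Finset.sum_product]
    refine Finset.sum_congr rfl fun α _ => Finset.sum_congr rfl fun j _ => ?_
    rw [smul_mul_smul_comm, bern_mul_eIdx d N α.1 α.2 j, smul_smul]
    congr 1
    ring
  rw [LHS]
  have RHS :
      ∑ γ : MIdx d (N + 1),
        (∑ j, if 1 ≤ γ.1 j then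
            a (γ.1 - eIdx d j) * b j * (γ.1 j : ℚ) / ((N : ℚ) + 1)
          else 0) • Bern d γ.1
        = ∑ p ∈ ((Finset.univ ×ˢ Finset.univ : Finset (MIdx d (N + 1) × Fin (d + 1))).filter
            (fun p => 1 ≤ p.1.1 p.2)),
            (a (p.1.1 - eIdx d p.2) * b p.2 * (p.1.1 p.2 : ℚ) / ((N : ℚ) + 1)) • Bern d p.1.1 := by
    rw [Finset.sum_filter, Finset.sum_product]
    refine Finset.sum_congr rfl fun γ _ => ?_
    rw [Finset.sum_smul]
    refine Finset.sum_congr rfl fun j _ => ?_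
    rw [ite_smul, zero_smul]
  rw [RHS]
  have hsumsub : ∀ (p : MIdx d (N + 1) × Fin (d + 1)), 1 ≤ p.1.1 p.2 →
      ∑ i, (p.1.1 - eIdx d p.2) i = N := by
    intro p h1
    have hadd : (p.1.1 - eIdx d p.2) + eIdx d p.2 = p.1.1 := by
      funext k
      by_cases hk : k = p.2 <;> simp [eIdx, hk, Pi.sub_apply]
      omega
    have := sum_add_eIdx d (p.1.1 - eIdx d p.2) p.2
    rw [hadd, p.1.2] at this
    omega
  refine Finset.sum_bij'
    (fun p _ => (⟨p.1.1 + eIdx d p.2, by rw [sum_add_eIdx, p.1.2]⟩, p.2))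
    (fun p hp => (⟨p.1.1 - eIdx d p.2, hsumsub p (Finset.mem_filter.mp hp).2⟩, p.2))
    ?_ ?_ ?_ ?_ ?_
  · -- hi : image lands in the filter
    intro p _
    refine Finset.mem_filter.mpr ⟨by simp, ?_⟩
    simp [eIdx]
  · -- hj
    intro p _
    simp
  · -- left_inv : j (i p) = p
    intro p _
    have hsub : (p.1.1 + eIdx d p.2) - eIdx d p.2 = p.1.1 := by
      funext k
      by_cases hk : k = p.2 <;> simp [eIdx, hk, Pi.sub_apply]
    simp [Prod.ext_iff, Subtype.ext_iff, hsub]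
  · -- right_inv : i (j p) = p
    intro p hp
    have h1 : 1 ≤ p.1.1 p.2 := (Finset.mem_filter.mp hp).2
    have hadd : (p.1.1 - eIdx d p.2) + eIdx d p.2 = p.1.1 := by
      funext k
      by_cases hk : k = p.2 <;> simp [eIdx, hk, Pi.sub_apply]
      omega
    simp [Prod.ext_iff, Subtype.ext_iff, hadd]
  · -- values agree
    intro p _
    have hsub : (p.1.1 + eIdx d p.2) - eIdx d p.2 = p.1.1 := by
      funext k
      by_cases hk : k = p.2 <;> simp [eIdx, hk, Pi.sub_apply]
    have hval : (p.1.1 + eIdx d p.2) p.2 = p.1.1 p.2 + 1 := by simp [eIdx]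
    simp only [hsub, hval]
    push_cast
    ring_nf
end

section
/- Let d ≥ 1, 0 ≤ i ≤ N, and let β be a multi-index of order N−i. Then, as multivariate polynomials over ℚ, B^{N−i}_β · (λ_0 + ⋯ + λ_d)^i = ∑_{|α|=N, β ≤ α componentwise} (C^{N−i}_β · C^{i}_{α−β} / C^N_α) · B^N_α. In particular, for every λ ∈ ℚ^{d+1} with ∑_j λ_j = 1, B^{N−i}_β(λ) = ∑_{|α|=N} (E^N_{N−i})_{αβ} B^N_α(λ), where (E^N_{N−i})_{αβ} = C^{N−i}_β · C^{i}_{α−β}/C^N_α if β ≤ α and 0 otherwise. -/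
/-- The entry `(E^N_{N-i})_{αβ} = C^{N-i}_β C^i_{α-β} / C^N_α` (for `β ≤ α`, else `0`)
of the degree elevation matrix, over `ℚ`. -/
noncomputable def elevEntry (d : ℕ) (α β : Fin (d + 1) → ℕ) : ℚ :=
  if ∀ k, β k ≤ α k then
    ((Nat.multinomial Finset.univ β * Nat.multinomial Finset.univ (α - β) : ℕ) : ℚ) /
      (Nat.multinomial Finset.univ α : ℚ)
  else 0

/-- For `0 ≤ i ≤ N` and a multi-index `β` of order `N - i`,
`B^{N-i}_β ⬝ (λ_0 + ⋯ + λ_d)^i = ∑_{|α|=N} (E^N_{N-i})_{αβ} B^N_α` as polynomials;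
in particular, for every `λ` with `∑ λ_j = 1`,
`B^{N-i}_β(λ) = ∑_{|α|=N} (E^N_{N-i})_{αβ} B^N_α(λ)`. -/
theorem bernstein_elevation (d N i : ℕ) (hd : 1 ≤ d) (hi : i ≤ N)
    (β : Fin (d + 1) → ℕ) (hβ : ∑ j, β j = N - i) :
    (Bern d β * (∑ k, MvPolynomial.X k) ^ i =
        ∑ α : MIdx d N, elevEntry d α.1 β • Bern d α.1) ∧
      ∀ lam : Fin (d + 1) → ℚ, ∑ k, lam k = 1 →
        MvPolynomial.eval lam (Bern d β) =
          ∑ α : MIdx d N, elevEntry d α.1 β * MvPolynomial.eval lam (Bern d α.1) := by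
  have hmain : Bern d β * (∑ k, MvPolynomial.X k) ^ i =
      ∑ α : MIdx d N, elevEntry d α.1 β • Bern d α.1 := by
    have hsub : (∑ α : MIdx d N, elevEntry d α.1 β • Bern d α.1) =
        ∑ α ∈ Finset.Nat.antidiagonalTuple (d + 1) N,
          elevEntry d α β • Bern d α :=
      (Finset.sum_subtype (Finset.Nat.antidiagonalTuple (d + 1) N)
        (fun α => Finset.Nat.mem_antidiagonalTuple)
        (fun α => elevEntry d α β • Bern d α)).symm
    rw [hsub, Finset.sum_pow_eq_sum_piAntidiag Finset.univ MvPolynomial.X i]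
    rw [← Finset.piAntidiag_univ_fin_eq_antidiagonalTuple N (d + 1)]
    rw [← Finset.sum_subset
        (Finset.filter_subset (fun α => ∀ k, β k ≤ α k) (Finset.piAntidiag Finset.univ N))
        (fun x hx hx' => by
          rw [Finset.mem_filter, not_and] at hx'
          rw [elevEntry, if_neg (hx' hx), zero_smul])]
    rw [Finset.mul_sum]
    refine Finset.sum_nbij' (fun γ => β + γ) (fun α => α - β) ?_ ?_ ?_ ?_ ?_
    · intro γ hγ
      simp only [Finset.mem_piAntidiag, Finset.mem_filter] at *
      refine ⟨⟨?_, fun _ _ => Finset.mem_univ _⟩, fun k => Nat.le_add_right _ _⟩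
      simp [Finset.sum_add_distrib, hβ, hγ.1, Nat.sub_add_cancel hi]
    · intro α hα
      simp only [Finset.mem_piAntidiag, Finset.mem_filter] at *
      refine ⟨?_, fun _ _ => Finset.mem_univ _⟩
      have : ∀ k ∈ Finset.univ, β k ≤ α k := fun k _ => hα.2 k
      rw [show (α - β : Fin (d+1) → ℕ) = fun k => α k - β k from rfl,
        Finset.sum_tsub_distrib Finset.univ this, hα.1.1, hβ, Nat.sub_sub_self hi]
    · intro γ hγ
      funext k
      simp [Pi.add_apply]
    · intro α hα
      rw [Finset.mem_filter] at hα
      funext k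
      exact Nat.add_sub_cancel' (hα.2 k)
    · intro γ hγ
      simp only [Finset.mem_piAntidiag] at hγ
      have hle : ∀ k, β k ≤ (β + γ) k := fun k => Nat.le_add_right _ _
      have hsub : β + γ - β = γ := funext fun k => Nat.add_sub_cancel_left (β k) (γ k)
      have hne : ((Nat.multinomial Finset.univ (β + γ) : ℕ) : ℚ) ≠ 0 := by
        exact_mod_cast (Nat.multinomial_pos _ _).ne'
      simp only [Bern, elevEntry, if_pos hle, hsub, MvPolynomial.smul_eq_C_mul]
      rw [mul_mul_mul_comm, ← Finset.prod_mul_distrib, ← mul_assoc, ← MvPolynomial.C_mul,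
        div_mul_cancel₀ _ hne]
      simp_rw [← pow_add]
      simp [MvPolynomial.C_eq_coe_nat, Pi.add_apply]
  refine ⟨hmain, fun lam hlam => ?_⟩
  have := congrArg (MvPolynomial.eval lam) hmain
  simpa [MvPolynomial.eval_sum, hlam, MvPolynomial.smul_eval] using this
end

section
/- Let d ≥ 1 and 0 ≤ i ≤ N. Then the degree elevation matrix factors as the product of one-degree elevation matrices: E^N_{N−i} = E^N_{N−1} · E^{N−1}_{N−2} ⋯ E^{N−i+1}_{N−i} (matrix product over ℝ). Here the one-degree elevation matrix E^m_{m−1} has nonzero entries exactly (E^m_{m−1})_{β+e_j, β} = (β_j + 1)/m for multi-indices β of order m−1 and 0 ≤ j ≤ d. -/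
open Matrix

/-- The degree elevation matrix `E^n_m` (from degree `m` to degree `n`, `m ≤ n`), with
entries `(E^n_m)_{αβ} = C^m_β ⬝ C^{n-m}_{α-β} / C^n_α` when `β ≤ α` componentwise,
and `0` otherwise. -/
noncomputable def elev (d n m : ℕ) : Matrix (MIdx d n) (MIdx d m) ℝ :=
  Matrix.of fun α β =>
    if ∀ i, β.1 i ≤ α.1 i then
      ((Nat.multinomial Finset.univ β.1 * Nat.multinomial Finset.univ (α.1 - β.1) : ℕ) : ℝ) /
        (Nat.multinomial Finset.univ α.1 : ℝ)
    else 0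

/-- The product of one-degree elevation matrices `E^N_{N-1} ⬝ E^{N-1}_{N-2} ⋯ E^{N-i+1}_{N-i}`. -/
noncomputable def elevChain (d N : ℕ) : (i : ℕ) → Matrix (MIdx d N) (MIdx d (N - i)) ℝ
  | 0 => (1 : Matrix (MIdx d (N - 0)) (MIdx d (N - 0)) ℝ)
  | i + 1 => elevChain d N i * elev d (N - i) (N - (i + 1))

lemma addE_order (d m : ℕ) (β : MIdx d m) (j : Fin (d + 1)) :
    ∑ k, (β.1 + eIdx d j) k = m + 1 := by
  have h : ∑ k, (β.1 k + eIdx d j k) = (∑ k, β.1 k) + ∑ k, eIdx d j k :=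
    Finset.sum_add_distrib
  simp only [Pi.add_apply] at *
  rw [h, β.2]
  simp [eIdx]

section Aux

variable {d : ℕ}

lemma eIdx_self {d : ℕ} (j : Fin (d + 1)) : eIdx d j j = 1 := by simp [eIdx]

lemma eIdx_ne {d : ℕ} {j k : Fin (d + 1)} (h : k ≠ j) : eIdx d j k = 0 := by simp [eIdx, h]

lemma prodFact_pos (f : Fin (d + 1) → ℕ) : (0 : ℝ) < ∏ i, ((f i).factorial : ℝ) :=
  Finset.prod_pos fun i _ => by exact_mod_cast (f i).factorial_pos

lemma mult_ne_zero (f : Fin (d + 1) → ℕ) :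
    (Nat.multinomial Finset.univ f : ℝ) ≠ 0 :=
  Nat.cast_ne_zero.mpr (Nat.multinomial_pos _ _).ne'

lemma mult_cast (f : Fin (d + 1) → ℕ) :
    (Nat.multinomial Finset.univ f : ℝ)
      = ((∑ i, f i).factorial : ℝ) / ∏ i, ((f i).factorial : ℝ) := by
  rw [eq_div_iff (prodFact_pos f).ne', mul_comm]
  exact_mod_cast congrArg (Nat.cast : ℕ → ℝ) (Nat.multinomial_spec Finset.univ f)

lemma sum_sub_of_le {f g : Fin (d + 1) → ℕ} (h : ∀ i, g i ≤ f i) :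
    ∑ i, (f - g) i = (∑ i, f i) - ∑ i, g i := by
  have h1 : ∀ i, g i + (f - g) i = f i := fun i => by
    have := h i; simp only [Pi.sub_apply]; omega
  have h2 : (∑ i, g i) + ∑ i, (f - g) i = ∑ i, f i := by
    rw [← Finset.sum_add_distrib]
    exact Finset.sum_congr rfl fun i _ => h1 i
  omega

lemma eq_e_of_sum_one (δ : Fin (d + 1) → ℕ) (h : ∑ i, δ i = 1) :
    ∃ j, δ = eIdx d j := by
  have hex : ∃ j, δ j ≠ 0 := by
    by_contra hc
    push_neg at hc
    simp [hc] at h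
  obtain ⟨j, hj⟩ := hex
  have h1 : δ j + ∑ i ∈ Finset.univ.erase j, δ i = 1 := by
    rw [Finset.add_sum_erase _ _ (Finset.mem_univ j)]; exact h
  refine ⟨j, funext fun k => ?_⟩
  by_cases hk : k = j
  · subst hk; rw [eIdx_self]; omega
  · have hle : δ k ≤ ∑ i ∈ Finset.univ.erase j, δ i :=
      Finset.single_le_sum (fun _ _ => Nat.zero_le _)
        (Finset.mem_erase.mpr ⟨hk, Finset.mem_univ k⟩)
    rw [eIdx_ne hk]
    omega

lemma exists_eq_add_e {m : ℕ} (γ β : Fin (d + 1) → ℕ) (hγ : ∑ i, γ i = m)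
    (hβ : ∑ i, β i = m + 1) (h : ∀ i, γ i ≤ β i) : ∃ j, β = γ + eIdx d j := by
  have h1 : ∑ i, (β - γ) i = 1 := by
    rw [sum_sub_of_le h, hγ, hβ]; omega
  obtain ⟨j, hj⟩ := eq_e_of_sum_one _ h1
  refine ⟨j, funext fun k => ?_⟩
  have := congrFun hj k
  simp only [Pi.sub_apply] at this
  simp only [Pi.add_apply, ← this]
  have := h k
  omega

lemma prod_fact_add_e (f : Fin (d + 1) → ℕ) (j : Fin (d + 1)) :
    ∏ i, (((f + eIdx d j) i).factorial : ℝ)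
      = ((f j : ℝ) + 1) * ∏ i, ((f i).factorial : ℝ) := by
  rw [← Finset.mul_prod_erase Finset.univ _ (Finset.mem_univ j),
    ← Finset.mul_prod_erase Finset.univ (fun i => ((f i).factorial : ℝ)) (Finset.mem_univ j)]
  have h1 : ∀ i ∈ Finset.univ.erase j,
      (((f + eIdx d j) i).factorial : ℝ) = ((f i).factorial : ℝ) := by
    intro i hi
    have hij : i ≠ j := (Finset.mem_erase.mp hi).1
    simp [eIdx, hij]
  rw [Finset.prod_congr rfl h1]
  have h2 : (f + eIdx d j) j = f j + 1 := by simp [eIdx]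
  rw [h2, Nat.factorial_succ]
  push_cast
  ring

lemma prod_fact_sub_e (f : Fin (d + 1) → ℕ) (j : Fin (d + 1)) (hj : 1 ≤ f j) :
    (f j : ℝ) * ∏ i, (((f - eIdx d j) i).factorial : ℝ)
      = ∏ i, ((f i).factorial : ℝ) := by
  rw [← Finset.mul_prod_erase Finset.univ _ (Finset.mem_univ j),
    ← Finset.mul_prod_erase Finset.univ (fun i => ((f i).factorial : ℝ)) (Finset.mem_univ j)]
  have h1 : ∀ i ∈ Finset.univ.erase j,
      (((f - eIdx d j) i).factorial : ℝ) = ((f i).factorial : ℝ) := by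
    intro i hi
    have hij : i ≠ j := (Finset.mem_erase.mp hi).1
    simp [eIdx, hij]
  rw [Finset.prod_congr rfl h1]
  have h2 : (f - eIdx d j) j = f j - 1 := by simp [eIdx]
  rw [h2, ← mul_assoc]
  congr 1
  have := Nat.mul_factorial_pred (n := f j) (by omega)
  exact_mod_cast congrArg (Nat.cast : ℕ → ℝ) this

lemma pascal (δ : Fin (d + 1) → ℕ) (hs : 1 ≤ ∑ i, δ i) :
    ∑ j, (if 1 ≤ δ j then ((Nat.multinomial Finset.univ (δ - eIdx d j) : ℕ) : ℝ) else 0)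
      = (Nat.multinomial Finset.univ δ : ℝ) := by
  have key : ∀ j, (if 1 ≤ δ j then ((Nat.multinomial Finset.univ (δ - eIdx d j) : ℕ) : ℝ) else 0)
      = (δ j : ℝ) * (((∑ i, δ i) - 1).factorial : ℝ) / ∏ i, ((δ i).factorial : ℝ) := by
    intro j
    by_cases hj : 1 ≤ δ j
    · rw [if_pos hj, mult_cast]
      have hsum : ∑ i, (δ - eIdx d j) i = (∑ i, δ i) - 1 := by
        have hle : ∀ i, eIdx d j i ≤ δ i := by
          intro i; by_cases hij : i = j <;> simp [eIdx, hij] <;> omega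
        rw [sum_sub_of_le hle]
        simp [eIdx]
      rw [hsum, div_eq_div_iff (prodFact_pos _).ne' (prodFact_pos _).ne']
      rw [mul_comm ((δ j : ℝ) * _) _, ← mul_assoc, mul_comm _ (δ j : ℝ),
        prod_fact_sub_e δ j hj]
      ring
    · rw [if_neg hj]
      have h0 : δ j = 0 := by omega
      simp [h0]
  rw [Finset.sum_congr rfl fun j _ => key j]
  rw [← Finset.sum_div, ← Finset.sum_mul, mult_cast]
  congr 1
  have hc : (∑ j, (δ j : ℝ)) = ((∑ j, δ j : ℕ) : ℝ) := by push_cast; rfl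
  rw [hc]
  exact_mod_cast congrArg (Nat.cast : ℕ → ℝ) (Nat.mul_factorial_pred (n := ∑ i, δ i) (by omega))

lemma mult_zero_fun : (Nat.multinomial Finset.univ (0 : Fin (d + 1) → ℕ) : ℝ) = 1 := by
  rw [mult_cast]
  simp

lemma mult_e (j : Fin (d + 1)) : (Nat.multinomial Finset.univ (eIdx d j) : ℝ) = 1 := by
  rw [mult_cast]
  have h1 : ∑ i, eIdx d j i = 1 := by simp [eIdx]
  have h2 : ∏ i, ((eIdx d j i).factorial : ℝ) = 1 := by
    apply Finset.prod_eq_one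
    intro i _
    by_cases hij : i = j <;> simp [eIdx, hij, Nat.factorial]
  rw [h1, h2]
  simp

lemma elev_self (d n : ℕ) : elev d n n = 1 := by
  ext α β
  rw [Matrix.one_apply]
  simp only [elev, Matrix.of_apply]
  by_cases h : α = β
  · subst h
    rw [if_pos (fun i => le_refl _), if_pos rfl]
    have h0 : α.1 - α.1 = (0 : Fin (d + 1) → ℕ) := by funext i; simp
    rw [h0]
    push_cast
    rw [mult_zero_fun, mul_one]
    exact div_self (mult_ne_zero α.1)
  · rw [if_neg h, if_neg]
    intro hle
    apply h
    apply Subtype.ext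
    funext i
    have heq : ∑ i, β.1 i = ∑ i, α.1 i := by rw [α.2, β.2]
    exact ((Finset.sum_eq_sum_iff_of_le (fun i _ => hle i)).mp heq i (Finset.mem_univ i)).symm

lemma elev_succ_apply (d m : ℕ) (β : MIdx d m) (j : Fin (d + 1)) :
    elev d (m + 1) m ⟨β.1 + eIdx d j, addE_order d m β j⟩ β =
      ((β.1 j : ℝ) + 1) / ((m : ℝ) + 1) := by
  simp only [elev, Matrix.of_apply]
  rw [if_pos (fun i => by simp only [Pi.add_apply]; omega)]
  have hsub : (β.1 + eIdx d j) - β.1 = eIdx d j := by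
    funext i; simp only [Pi.sub_apply, Pi.add_apply]; omega
  rw [hsub]
  push_cast
  rw [mult_e, mult_cast, mult_cast, prod_fact_add_e, β.2, addE_order d m β j,
    Nat.factorial_succ]
  have hF := (prodFact_pos β.1).ne'
  have hfm : ((m.factorial : ℝ)) ≠ 0 := by exact_mod_cast m.factorial_pos.ne'
  have hm1 : ((m : ℝ) + 1) ≠ 0 := by positivity
  have hbj : ((β.1 j : ℝ) + 1) ≠ 0 := by positivity
  field_simp
  push_cast
  ring

lemma elev_succ_apply_zero (d m : ℕ) (α : MIdx d (m + 1)) (β : MIdx d m)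
    (h : ¬ ∃ j, α.1 = β.1 + eIdx d j) : elev d (m + 1) m α β = 0 := by
  simp only [elev, Matrix.of_apply]
  rw [if_neg]
  intro hle
  obtain ⟨j, hj⟩ := exists_eq_add_e β.1 α.1 β.2 α.2 hle
  exact h ⟨j, hj⟩

lemma elev_step (d n m : ℕ) (h : m + 1 ≤ n) :
    elev d n m = elev d n (m + 1) * elev d (m + 1) m := by
  ext α γ
  rw [Matrix.mul_apply]
  by_cases hle : ∀ i, γ.1 i ≤ α.1 i
  · -- positive case
    set g : Fin (d + 1) → MIdx d (m + 1) :=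
      fun j => ⟨γ.1 + eIdx d j, addE_order d m γ j⟩ with hg
    have himg : ∀ β ∈ Finset.univ, β ∉ Finset.image g Finset.univ →
        elev d n (m + 1) α β * elev d (m + 1) m β γ = 0 := by
      intro β _ hβ
      by_cases h2 : ∀ i, γ.1 i ≤ β.1 i
      · obtain ⟨j, hj⟩ := exists_eq_add_e γ.1 β.1 γ.2 β.2 h2
        exfalso
        exact hβ (Finset.mem_image.mpr ⟨j, Finset.mem_univ j, Subtype.ext hj.symm⟩)
      · rw [show elev d (m + 1) m β γ = 0 from by
          simp only [elev, Matrix.of_apply]; rw [if_neg h2], mul_zero]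
    rw [← Finset.sum_subset (Finset.subset_univ _) himg]
    have ginj : ∀ x ∈ Finset.univ, ∀ y ∈ Finset.univ, g x = g y → x = y := by
      intro x _ y _ hxy
      by_contra hne
      have h1 : γ.1 x + eIdx d x x = γ.1 x + eIdx d y x :=
        congrFun (congrArg Subtype.val hxy) x
      rw [eIdx_self, eIdx_ne hne] at h1
      omega
    rw [Finset.sum_image ginj]
    have hB : ∀ j, elev d (m + 1) m (g j) γ = ((γ.1 j : ℝ) + 1) / ((m : ℝ) + 1) :=
      fun j => elev_succ_apply d m γ j
    have key : ∀ j, elev d n (m + 1) α (g j) * elev d (m + 1) m (g j) γ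
        = (Nat.multinomial Finset.univ γ.1 : ℝ) / (Nat.multinomial Finset.univ α.1 : ℝ) *
          (if 1 ≤ (α.1 - γ.1) j then
            ((Nat.multinomial Finset.univ ((α.1 - γ.1) - eIdx d j) : ℕ) : ℝ) else 0) := by
      intro j
      rw [hB j]
      simp only [elev, Matrix.of_apply, hg]
      by_cases hc : ∀ i, (γ.1 + eIdx d j) i ≤ α.1 i
      · have hc1 : 1 ≤ (α.1 - γ.1) j := by
          have := hc j
          simp only [Pi.add_apply, eIdx_self] at this
          simp only [Pi.sub_apply]
          omega
        rw [if_pos hc, if_pos hc1]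
        have hrw : α.1 - (γ.1 + eIdx d j) = (α.1 - γ.1) - eIdx d j := by
          funext i; simp only [Pi.sub_apply, Pi.add_apply]; omega
        rw [hrw]
        push_cast
        rw [mult_cast γ.1, mult_cast (γ.1 + eIdx d j), prod_fact_add_e, γ.2,
          addE_order d m γ j, Nat.factorial_succ]
        have hF := (prodFact_pos γ.1).ne'
        have hfm : ((m.factorial : ℝ)) ≠ 0 := by exact_mod_cast m.factorial_pos.ne'
        have hm1 : ((m : ℝ) + 1) ≠ 0 := by positivity
        have hgj : ((γ.1 j : ℝ) + 1) ≠ 0 := by positivity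
        have hA := mult_ne_zero (d := d) α.1
        field_simp
        push_cast
        ring
      · have hc1 : ¬ 1 ≤ (α.1 - γ.1) j := by
          intro hcon
          apply hc
          intro i
          simp only [Pi.add_apply]
          by_cases hij : i = j
          · subst hij
            rw [eIdx_self]
            simp only [Pi.sub_apply] at hcon
            omega
          · rw [eIdx_ne hij]
            simpa using hle i
        rw [if_neg hc, if_neg hc1, zero_mul, mul_zero]
    rw [Finset.sum_congr rfl fun j _ => key j, ← Finset.mul_sum]
    have hps : 1 ≤ ∑ i, (α.1 - γ.1) i := by
      rw [sum_sub_of_le hle, α.2, γ.2]; omega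
    rw [pascal (α.1 - γ.1) hps]
    simp only [elev, Matrix.of_apply]
    rw [if_pos hle]
    push_cast
    ring
  · rw [show elev d n m α γ = 0 from by
      simp only [elev, Matrix.of_apply]; rw [if_neg hle]]
    symm
    apply Finset.sum_eq_zero
    intro β _
    by_cases h1 : ∀ i, β.1 i ≤ α.1 i
    · by_cases h2 : ∀ i, γ.1 i ≤ β.1 i
      · exact absurd (fun i => le_trans (h2 i) (h1 i)) hle
      · rw [show elev d (m + 1) m β γ = 0 from by
          simp only [elev, Matrix.of_apply]; rw [if_neg h2], mul_zero]
    · rw [show elev d n (m + 1) α β = 0 from by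
        simp only [elev, Matrix.of_apply]; rw [if_neg h1], zero_mul]

end Aux

/-- For `0 ≤ i ≤ N`, the degree elevation matrix factors as the product of
one-degree elevation matrices: `E^N_{N-i} = E^N_{N-1} ⬝ E^{N-1}_{N-2} ⋯ E^{N-i+1}_{N-i}`.
Here the one-degree elevation matrix `E^m_{m-1}` has nonzero entries exactly
`(E^{m+1}_m)_{β+e_j, β} = (β_j + 1)/(m+1)`. -/
theorem elev_eq_chain (d N i : ℕ) (hd : 1 ≤ d) (hi : i ≤ N) :
    elev d N (N - i) = elevChain d N i ∧
      (∀ (m : ℕ) (β : MIdx d m) (j : Fin (d + 1)),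
          elev d (m + 1) m ⟨β.1 + eIdx d j, addE_order d m β j⟩ β =
            ((β.1 j : ℝ) + 1) / ((m : ℝ) + 1)) ∧
      (∀ (m : ℕ) (α : MIdx d (m + 1)) (β : MIdx d m),
          (¬ ∃ j, α.1 = β.1 + eIdx d j) → elev d (m + 1) m α β = 0) := by
  refine ⟨?_, fun m β j => elev_succ_apply d m β j,
    fun m α β h => elev_succ_apply_zero d m α β h⟩
  induction i with
  | zero =>
    show elev d N N = _
    simp only [elevChain]
    exact elev_self d N
  | succ i ih =>
    simp only [elevChain]
    rw [← ih (by omega)]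
    have hk : N - i = (N - (i + 1)) + 1 := by omega
    rw [hk]
    exact elev_step d N (N - (i + 1)) (by omega)
end
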